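/- Let y > 0 and let g, h ∈ 𝓕_y with integrable derivatives g' and h' satisfying ∫₀^y |g'| dλ > 0 and ∫₀^y |h'| dλ > 0. If for every z > 0 one has S⁺_y(z | g) / ∫₀^y |g'| dλ ≤ S⁺_y(z | h) / ∫₀^y |h'| dλ, where S⁺_y(z | f) = λ{x ∈ [0,y] : (f')⁺(x) > z}, then LOD*_y(g) ≤ LOD*_y(h). (Strict non-increase dominance g ≥_{SD,y} h implies g ≥_{D,y} h.) -/

import Mathlib

open MeasureTheory Set Filter ENNReal

lemma layer_integrable {α : Type*} [MeasurableSpace α] {μ : Measure α} {f : α → ℝ}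
    (f_intble : Integrable f μ) (f_nn : 0 ≤ᵐ[μ] f) :
    IntegrableOn (fun t => (μ {a | t < f a}).toReal) (Ioi (0 : ℝ)) := by
  have hmeas : Measurable fun t : ℝ => (μ {a | t < f a}).toReal := by
    refine Measurable.ennreal_toReal ?_
    exact Antitone.measurable (fun _ _ hst => measure_mono (fun _ h => lt_of_le_of_lt hst h))
  refine ⟨hmeas.aestronglyMeasurable, ?_⟩
  rw [hasFiniteIntegral_iff_ofReal (Eventually.of_forall fun t => ENNReal.toReal_nonneg)]
  have key := lintegral_eq_lintegral_meas_lt μ f_nn f_intble.aemeasurable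
  have fin : ∀ t : ℝ, 0 < t → μ {a | t < f a} < ∞ := fun t ht =>
    f_intble.measure_gt_lt_top ht
  have : ∫⁻ t in Ioi (0:ℝ), ENNReal.ofReal ((μ {a | t < f a}).toReal)
      = ∫⁻ t in Ioi (0:ℝ), μ {a | t < f a} := by
    apply setLIntegral_congr_fun measurableSet_Ioi ?_
    exact fun t ht => ENNReal.ofReal_toReal (fin t ht).ne
  rw [this, ← key]
  exact f_intble.lintegral_lt_top

/-- Strict non-increase dominance implies ordering of normalized indices of lack of
decrease: if for every `z > 0` the normalized occupation time of `(g')⁺` above `z`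
is at most that of `(h')⁺`, then `LOD*_y(g) ≤ LOD*_y(h)`. -/
theorem strict_dominance_implies_lod_star_le (y : ℝ) (hy : 0 < y) (g g' h h' : ℝ → ℝ)
    (hg' : IntervalIntegrable g' volume 0 y)
    (hg : ∀ x ∈ Icc (0 : ℝ) y, g x = ∫ t in (0 : ℝ)..x, g' t)
    (hh' : IntervalIntegrable h' volume 0 y)
    (hh : ∀ x ∈ Icc (0 : ℝ) y, h x = ∫ t in (0 : ℝ)..x, h' t)
    (hgpos : 0 < ∫ x in (0 : ℝ)..y, |g' x|)
    (hhpos : 0 < ∫ x in (0 : ℝ)..y, |h' x|)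
    (hdom : ∀ z > (0 : ℝ),
      (volume {x ∈ Icc (0 : ℝ) y | z < max (g' x) 0}).toReal /
          (∫ x in (0 : ℝ)..y, |g' x|) ≤
        (volume {x ∈ Icc (0 : ℝ) y | z < max (h' x) 0}).toReal /
          (∫ x in (0 : ℝ)..y, |h' x|)) :
    ((∫ x in (0 : ℝ)..y, max (g' x) 0) / ∫ x in (0 : ℝ)..y, |g' x|) ≤
      ((∫ x in (0 : ℝ)..y, max (h' x) 0) / ∫ x in (0 : ℝ)..y, |h' x|) := by
  set μ : Measure ℝ := volume.restrict (Icc (0 : ℝ) y) with hμ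
  have hset : ∀ (f : ℝ → ℝ) (t : ℝ),
      μ {a | t < max (f a) 0} = volume {x ∈ Icc (0 : ℝ) y | t < max (f x) 0} := by
    intro f t
    rw [hμ, Measure.restrict_apply' measurableSet_Icc]
    congr 1
    ext x
    simp [and_comm]
  have key : ∀ f' : ℝ → ℝ, IntervalIntegrable f' volume 0 y →
      (∫ x in (0 : ℝ)..y, max (f' x) 0)
        = ∫ t in Ioi (0:ℝ), (volume {x ∈ Icc (0 : ℝ) y | t < max (f' x) 0}).toReal ∧
      IntegrableOn (fun t => (volume {x ∈ Icc (0 : ℝ) y | t < max (f' x) 0}).toReal)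
        (Ioi (0:ℝ)) := by
    intro f' hf'
    have hint : Integrable (fun x => max (f' x) 0) μ := by
      have : IntegrableOn f' (Icc (0:ℝ) y) :=
        (integrableOn_Icc_iff_integrableOn_Ioc).mpr hf'.1
      exact this.pos_part
    have hnn : 0 ≤ᵐ[μ] fun x => max (f' x) 0 :=
      Eventually.of_forall fun x => le_max_right _ _
    have h1 := hint.integral_eq_integral_meas_lt hnn
    have h2 := layer_integrable hint hnn
    simp only [measureReal_def, hset] at h1 h2
    constructor
    · rw [intervalIntegral.integral_of_le hy.le, ← integral_Icc_eq_integral_Ioc]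
      exact h1
    · exact h2
  obtain ⟨hgeq, hgint⟩ := key g' hg'
  obtain ⟨hheq, hhint⟩ := key h' hh'
  rw [hgeq, hheq, ← integral_div, ← integral_div]
  apply setIntegral_mono_on (hgint.div_const _) (hhint.div_const _) measurableSet_Ioi
  intro t ht
  exact hdom t ht
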